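/- Let G be a finite simple graph on n ≥ 1 vertices with minimum degree δ. Then ᾱ(G) = n − max over integers s with 1 ≤ s ≤ n of (min over vertex sets S with |S| = s of |N(S)|), and moreover this maximum is attained within the range 1 ≤ s ≤ n − δ, i.e., ᾱ(G) = n − max over integers s with 1 ≤ s ≤ n − δ of (min over vertex sets S with |S| = s of |N(S)|). -/

import Mathlib

namespace SimpleGraph

variable {V : Type*}

/-- `G` has an `(s,t)`-bipartite-hole. -/
def HasBipHole (G : SimpleGraph V) (s t : ℕ) : Prop :=
  ∃ S T : Finset V, Disjoint S T ∧ S.card = s ∧ T.card = t ∧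
    ∀ a ∈ S, ∀ b ∈ T, ¬ G.Adj a b

/-- The bipartite-hole-number `ᾱ(G)`. -/
noncomputable def bipHoleNum (G : SimpleGraph V) : ℕ :=
  sInf {k | 0 < k ∧ ∃ s t : ℕ, 0 < s ∧ 0 < t ∧ s + t = k + 1 ∧ ¬ G.HasBipHole s t}

/-- The external neighborhood `N(S)` of a vertex set `S`: the vertices outside `S`
having a neighbor in `S`. -/
def extNbhd [Fintype V] [DecidableEq V] (G : SimpleGraph V) [DecidableRel G.Adj]
    (S : Finset V) : Finset V :=
  Finset.univ.filter fun v => v ∉ S ∧ ∃ u ∈ S, G.Adj u v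

end SimpleGraph

section Aux

open Finset SimpleGraph

variable {V : Type*} [Fintype V] [DecidableEq V] (G : SimpleGraph V) [DecidableRel G.Adj]

lemma mem_extNbhd {S : Finset V} {v : V} :
    v ∈ G.extNbhd S ↔ v ∉ S ∧ ∃ u ∈ S, G.Adj u v := by
  simp [SimpleGraph.extNbhd]

lemma extNbhd_disjoint (S : Finset V) : Disjoint S (G.extNbhd S) := by
  rw [Finset.disjoint_left]
  intro a ha h
  exact ((mem_extNbhd G).1 h).1 ha

lemma card_extNbhd_add (S : Finset V) :
    S.card + (G.extNbhd S).card ≤ Fintype.card V := by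
  rw [← Finset.card_union_of_disjoint (extNbhd_disjoint G S)]
  simpa using Finset.card_le_card (Finset.subset_univ _)

lemma hole_iff (s t : ℕ) :
    G.HasBipHole s t ↔ ∃ S : Finset V, S.card = s ∧
      s + (G.extNbhd S).card + t ≤ Fintype.card V := by
  constructor
  · rintro ⟨S, T, hdisj, hS, hT, hno⟩
    refine ⟨S, hS, ?_⟩
    have hdT : Disjoint (S ∪ G.extNbhd S) T := by
      rw [Finset.disjoint_left]
      intro b hb hbT
      rcases Finset.mem_union.1 hb with h | h
      · exact (Finset.disjoint_left.1 hdisj h) hbT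
      · rcases (mem_extNbhd G).1 h with ⟨-, u, hu, hadj⟩
        exact hno u hu b hbT hadj
    have := Finset.card_le_card (Finset.subset_univ ((S ∪ G.extNbhd S) ∪ T))
    rw [Finset.card_union_of_disjoint hdT,
      Finset.card_union_of_disjoint (extNbhd_disjoint G S)] at this
    simpa [hS, hT] using this
  · rintro ⟨S, hS, hle⟩
    have hsub : S ∪ G.extNbhd S ⊆ Finset.univ := Finset.subset_univ _
    have hcard : t ≤ (Finset.univ \ (S ∪ G.extNbhd S)).card := by
      rw [Finset.card_sdiff_of_subset hsub, Finset.card_union_of_disjoint (extNbhd_disjoint G S),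
        Finset.card_univ]
      omega
    obtain ⟨T, hTsub, hTcard⟩ := Finset.exists_subset_card_eq hcard
    refine ⟨S, T, ?_, hS, hTcard, ?_⟩
    · rw [Finset.disjoint_left]
      intro a ha haT
      have := hTsub haT
      rw [Finset.mem_sdiff] at this
      exact this.2 (Finset.mem_union_left _ ha)
    · intro a ha b hbT hadj
      have hb := hTsub hbT
      rw [Finset.mem_sdiff] at hb
      exact hb.2 (Finset.mem_union_right _ ((mem_extNbhd G).2
        ⟨fun hbS => hb.2 (Finset.mem_union_left _ hbS), a, ha, hadj⟩))

/-- The "min over sets of size s" function. -/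
noncomputable def minNbhd (s : ℕ) : ℕ :=
  sInf {c | ∃ S : Finset V, S.card = s ∧ c = (G.extNbhd S).card}

lemma minNbhd_exists {s : ℕ} (hs : s ≤ Fintype.card V) :
    ∃ S : Finset V, S.card = s ∧ minNbhd G s = (G.extNbhd S).card := by
  have hne : {c | ∃ S : Finset V, S.card = s ∧ c = (G.extNbhd S).card}.Nonempty := by
    obtain ⟨S, -, hScard⟩ := Finset.exists_subset_card_eq (s := (Finset.univ : Finset V)) (n := s)
      (by simpa using hs)
    exact ⟨(G.extNbhd S).card, S, hScard, rfl⟩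
  exact Nat.sInf_mem hne

lemma minNbhd_le {s : ℕ} (S : Finset V) (hS : S.card = s) :
    minNbhd G s ≤ (G.extNbhd S).card :=
  Nat.sInf_le ⟨S, hS, rfl⟩

lemma minNbhd_add_le {s : ℕ} (hs : s ≤ Fintype.card V) :
    s + minNbhd G s ≤ Fintype.card V := by
  obtain ⟨S, hScard, hEq⟩ := minNbhd_exists G hs
  rw [hEq, ← hScard]
  exact card_extNbhd_add G S

lemma extNbhd_singleton (v : V) : G.extNbhd {v} = G.neighborFinset v := by
  ext w
  simp only [mem_extNbhd, Finset.mem_singleton, SimpleGraph.mem_neighborFinset]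
  constructor
  · rintro ⟨-, u, rfl, h⟩; exact h
  · intro h; exact ⟨fun hw => G.irrefl (hw ▸ h), v, rfl, h⟩

lemma minNbhd_one [Nonempty V] : minNbhd G 1 = G.minDegree := by
  apply le_antisymm
  · obtain ⟨v, hv⟩ := G.exists_minimal_degree_vertex
    calc minNbhd G 1 ≤ (G.extNbhd {v}).card := minNbhd_le G {v} (by simp)
    _ = G.degree v := by rw [extNbhd_singleton]; rfl
    _ = G.minDegree := hv.symm
  · obtain ⟨S, hScard, hEq⟩ := minNbhd_exists (s := 1) G Fintype.card_pos
    obtain ⟨v, rfl⟩ := Finset.card_eq_one.1 hScard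
    rw [hEq, extNbhd_singleton]
    exact G.minDegree_le_degree v

end Aux


/-- For a graph `G` on `n ≥ 1` vertices with minimum degree `δ`,
`ᾱ(G) = n - max_{1 ≤ s ≤ n} min_{|S| = s} |N(S)|`, and the maximum is attained in the
range `1 ≤ s ≤ n - δ`. -/
theorem stmt5 {V : Type*} [Fintype V] [DecidableEq V] [Nonempty V]
    (G : SimpleGraph V) [DecidableRel G.Adj] :
    G.bipHoleNum = Fintype.card V -
        sSup {m | ∃ s : ℕ, 1 ≤ s ∧ s ≤ Fintype.card V ∧
          m = sInf {c | ∃ S : Finset V, S.card = s ∧ c = (G.extNbhd S).card}} ∧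
    G.bipHoleNum = Fintype.card V -
        sSup {m | ∃ s : ℕ, 1 ≤ s ∧ s ≤ Fintype.card V - G.minDegree ∧
          m = sInf {c | ∃ S : Finset V, S.card = s ∧ c = (G.extNbhd S).card}} := by
  set n := Fintype.card V with hn
  have hn1 : 1 ≤ n := Fintype.card_pos
  -- key lemma
  have key : ∀ M : ℕ, (∃ s₀, 1 ≤ s₀ ∧ s₀ ≤ n ∧ M = minNbhd G s₀) →
      (∀ s, 1 ≤ s → s ≤ n → minNbhd G s ≤ M) → G.bipHoleNum = n - M := by
    rintro M ⟨s₀, hs₀1, hs₀n, hM⟩ hub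
    have hMle : s₀ + M ≤ n := hM ▸ minNbhd_add_le G hs₀n
    have hmem : (n - M) ∈ {k | 0 < k ∧ ∃ s t : ℕ, 0 < s ∧ 0 < t ∧ s + t = k + 1 ∧
        ¬ G.HasBipHole s t} := by
      refine ⟨by omega, s₀, n - M - s₀ + 1, by omega, by omega, by omega, ?_⟩
      rw [hole_iff]
      rintro ⟨S, hScard, hle⟩
      have := minNbhd_le G S hScard
      omega
    apply le_antisymm
    · exact Nat.sInf_le hmem
    · apply le_csInf ⟨_, hmem⟩
      rintro k ⟨hk, s, t, hs, ht, hst, hnh⟩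
      by_cases hsn : s ≤ n
      · have hle : minNbhd G s ≤ M := hub s hs hsn
        obtain ⟨S, hScard, hEq⟩ := minNbhd_exists G hsn
        rw [hole_iff] at hnh
        push_neg at hnh
        have := hnh S hScard
        omega
      · -- s > n : then any k = s + t - 1 > n ≥ n - M
        omega
  have hδn : G.minDegree < n := by
    obtain ⟨v⟩ := ‹Nonempty V›
    exact lt_of_le_of_lt (G.minDegree_le_degree v) (G.degree_lt_card_verts v)
  -- first set
  set A := {m | ∃ s : ℕ, 1 ≤ s ∧ s ≤ n ∧ m = minNbhd G s} with hA
  set B := {m | ∃ s : ℕ, 1 ≤ s ∧ s ≤ n - G.minDegree ∧ m = minNbhd G s} with hB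
  have hAbdd : BddAbove A := by
    refine ⟨n, ?_⟩
    rintro m ⟨s, hs1, hsn, rfl⟩
    have := minNbhd_add_le G hsn
    omega
  have hBbdd : BddAbove B := by
    refine ⟨n, ?_⟩
    rintro m ⟨s, hs1, hsn, rfl⟩
    have := minNbhd_add_le G (le_trans hsn (by omega))
    omega
  have hAne : A.Nonempty := ⟨minNbhd G 1, 1, le_refl 1, hn1, rfl⟩
  have hBne : B.Nonempty := ⟨minNbhd G 1, 1, le_refl 1, by omega, rfl⟩
  have hAmem := Nat.sSup_mem hAne hAbdd
  have hBmem := Nat.sSup_mem hBne hBbdd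
  obtain ⟨sA, hsA1, hsAn, hsAeq⟩ := hAmem
  obtain ⟨sB, hsB1, hsBn, hsBeq⟩ := hBmem
  have h1 : G.bipHoleNum = n - sSup A := by
    apply key _ ⟨sA, hsA1, hsAn, hsAeq⟩
    intro s hs1 hsn
    exact le_csSup hAbdd ⟨s, hs1, hsn, rfl⟩
  have hδ1 : minNbhd G 1 = G.minDegree := minNbhd_one G
  have h2 : G.bipHoleNum = n - sSup B := by
    apply key _ ⟨sB, hsB1, le_trans hsBn (by omega), hsBeq⟩
    intro s hs1 hsn
    by_cases hsmall : s ≤ n - G.minDegree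
    · exact le_csSup hBbdd ⟨s, hs1, hsmall, rfl⟩
    · -- s > n - δ, so minNbhd G s ≤ n - s < δ = minNbhd G 1 ≤ sSup B
      have h3 : minNbhd G s + s ≤ n := by have := minNbhd_add_le G hsn; omega
      have h4 : minNbhd G 1 ≤ sSup B := le_csSup hBbdd ⟨1, le_refl 1, by omega, rfl⟩
      omega
  exact ⟨h1, h2⟩
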